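/- Let n ≥ 1, let R be a finite commutative symmetric ℤ/n-algebra with non-degenerate linear functional ψ : R → ℤ/n, let ζ ∈ ℂ be a primitive n-th root of unity, and let A_R be the R×R matrix over ℂ with entries A_R(r,t) = ζ^{ψ(r·t)}. Then for a vector v : R → ℚ, every entry of A_R v lies in ℚ if and only if v is constant on the orbits of the (ℤ/n)ˣ-action on R, i.e., v(u•r) = v(r) for all u ∈ (ℤ/n)ˣ and r ∈ R. -/

import Mathlib

open Finset

namespace DFTAux

variable {n : ℕ} {F : Type*} [Field F] {ζ : F}

lemma pow_mod (hζ : IsPrimitiveRoot ζ n) (a : ℕ) : ζ ^ (a % n) = ζ ^ a := by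
  conv_rhs => rw [← Nat.div_add_mod a n]
  rw [pow_add, pow_mul, hζ.pow_eq_one, one_pow, one_mul]

lemma pow_val_natCast [NeZero n] (hζ : IsPrimitiveRoot ζ n) (a : ℕ) :
    ζ ^ ((a : ZMod n)).val = ζ ^ a := by
  rw [ZMod.val_natCast, pow_mod hζ]

lemma pow_val_add [NeZero n] (hζ : IsPrimitiveRoot ζ n) (x y : ZMod n) :
    ζ ^ (x + y).val = ζ ^ x.val * ζ ^ y.val := by
  rw [ZMod.val_add, pow_mod hζ, pow_add]

lemma pow_val_mul [NeZero n] (hζ : IsPrimitiveRoot ζ n) (x y : ZMod n) :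
    ζ ^ (x * y).val = ζ ^ (x.val * y.val) := by
  have h : ((x.val * y.val : ℕ) : ZMod n) = x * y := by
    rw [Nat.cast_mul, ZMod.natCast_val, ZMod.natCast_val, ZMod.cast_id, ZMod.cast_id]
  rw [← h, pow_val_natCast hζ]

lemma pow_val_ne_one [NeZero n] (hζ : IsPrimitiveRoot ζ n) {x : ZMod n} (hx : x ≠ 0) :
    ζ ^ x.val ≠ 1 :=
  hζ.pow_ne_one_of_pos_of_lt (fun h => hx ((ZMod.val_eq_zero x).mp h))
    (ZMod.val_lt x)

variable {R : Type*} [CommRing R] [Fintype R] [Algebra (ZMod n) R]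

lemma char_sum_eq_zero [NeZero n] (ψ : R →+ ZMod n)
    (hψ : ∀ I : Ideal R, (∀ x ∈ I, ψ x = 0) → I = ⊥)
    (hζ : IsPrimitiveRoot ζ n) {a : R} (ha : a ≠ 0) :
    ∑ t : R, ζ ^ (ψ (a * t)).val = 0 := by
  obtain ⟨t₀, ht₀⟩ : ∃ t, ψ (a * t) ≠ 0 := by
    by_contra hc
    push_neg at hc
    have hI : Ideal.span {a} = ⊥ := hψ _ (fun x hx => by
      obtain ⟨y, rfl⟩ := Ideal.mem_span_singleton'.mp hx
      rw [mul_comm]; exact hc y)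
    exact ha (by simpa [hI] using Ideal.mem_span_singleton_self a)
  have key : ζ ^ (ψ (a * t₀)).val * ∑ t : R, ζ ^ (ψ (a * t)).val
      = ∑ t : R, ζ ^ (ψ (a * t)).val := by
    rw [Finset.mul_sum]
    apply Fintype.sum_equiv (Equiv.addLeft t₀)
    intro t
    rw [← pow_val_add hζ, ← map_add, ← mul_add]
    rfl
  have h2 : (ζ ^ (ψ (a * t₀)).val - 1) * ∑ t : R, ζ ^ (ψ (a * t)).val = 0 := by
    rw [sub_mul, one_mul, key, sub_self]
  rcases mul_eq_zero.mp h2 with h | h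
  · exact absurd (sub_eq_zero.mp h) (pow_val_ne_one hζ ht₀)
  · exact h


lemma inversion [NeZero n] [CharZero F] (ψ : R →+ ZMod n)
    (hψ : ∀ I : Ideal R, (∀ x ∈ I, ψ x = 0) → I = ⊥)
    (hζ : IsPrimitiveRoot ζ n) (d : R → F)
    (hd : ∀ r : R, ∑ t : R, ζ ^ (ψ (r * t)).val * d t = 0) (s : R) : d s = 0 := by
  classical
  have swap : ∑ r : R, ζ ^ (ψ (r * (-s))).val * ∑ t : R, ζ ^ (ψ (r * t)).val * d t
      = ∑ t : R, (∑ r : R, ζ ^ (ψ (r * (t - s))).val) * d t := by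
    simp_rw [Finset.mul_sum, Finset.sum_mul]
    rw [Finset.sum_comm]
    refine Finset.sum_congr rfl fun t _ => Finset.sum_congr rfl fun r _ => ?_
    rw [← mul_assoc, ← pow_val_add hζ, ← map_add]
    have h : r * (-s) + r * t = r * (t - s) := by ring
    rw [h]
  have h0 : ∑ r : R, ζ ^ (ψ (r * (-s))).val * ∑ t : R, ζ ^ (ψ (r * t)).val * d t = 0 := by
    simp [hd]
  have key : ∀ t : R, (∑ r : R, ζ ^ (ψ (r * (t - s))).val) * d t
      = if t = s then (Fintype.card R : F) * d s else 0 := by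
    intro t
    by_cases h : t = s
    · subst h
      simp [Finset.card_univ]
    · rw [if_neg h]
      have hcs := char_sum_eq_zero ψ hψ hζ (a := t - s) (sub_ne_zero.mpr h)
      have : (∑ r : R, ζ ^ (ψ (r * (t - s))).val) = 0 := by
        rw [← hcs]
        exact Finset.sum_congr rfl fun r _ => by rw [mul_comm r (t - s)]
      rw [this, zero_mul]
  have main : (Fintype.card R : F) * d s = 0 := by
    rw [← h0, swap]
    rw [Finset.sum_congr rfl fun t _ => key t]
    simp
  have hcard : (Fintype.card R : F) ≠ 0 := by
    exact_mod_cast Fintype.card_ne_zero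
  exact (mul_eq_zero.mp main).resolve_left hcard

end DFTAux


/-- Let `R` be a finite commutative symmetric `ZMod n`-algebra with non-degenerate linear
functional `ψ`, and let `A_R` be the DFT matrix `A_R (r, t) = ζ ^ ψ (r * t)`. A rational
vector `v : R → ℚ` has `A_R v` with all entries rational iff `v` is constant on the orbits
of the `(ZMod n)ˣ`-action on `R`. -/
theorem dft_rational_iff_constant_on_orbits (n : ℕ) (hn : 1 ≤ n) (R : Type*) [CommRing R]
    [Fintype R] [Algebra (ZMod n) R] (ψ : R →+ ZMod n)
    (hψ : ∀ I : Ideal R, (∀ x ∈ I, ψ x = 0) → I = ⊥)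
    (ζ : ℂ) (hζ : IsPrimitiveRoot ζ n) (v : R → ℚ) :
    let A : Matrix R R ℂ := Matrix.of fun r t => ζ ^ (ψ (r * t)).val
    (∀ r : R, A.mulVec (fun t => (v t : ℂ)) r ∈ Set.range ((↑) : ℚ → ℂ)) ↔
      ∀ (u : (ZMod n)ˣ) (r : R), v ((u : ZMod n) • r) = v r := by
  intro A
  haveI : NeZero n := ⟨by omega⟩
  classical
  have hA : ∀ r t : R, A r t = ζ ^ (ψ (r * t)).val := fun r t => rfl
  set N : ℕ+ := ⟨n, hn⟩ with hNdef
  set K := CyclotomicField N ℚ with hK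
  haveI : NeZero (N : ℕ) := ⟨N.ne_zero⟩
  haveI : NeZero (((N : ℕ) : ℚ)) := ⟨Nat.cast_ne_zero.mpr N.ne_zero⟩
  haveI hCyc : IsCyclotomicExtension {(N : ℕ)} ℚ K :=
    CyclotomicField.isCyclotomicExtension (N : ℕ) ℚ
  set ζ' : K := IsCyclotomicExtension.zeta N ℚ K with hzdef
  have hζ' : IsPrimitiveRoot ζ' (N : ℕ) := IsCyclotomicExtension.zeta_spec N ℚ K
  have hζ'n : IsPrimitiveRoot ζ' n := hζ'
  have hirr : Irreducible (Polynomial.cyclotomic N ℚ) :=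
    Polynomial.cyclotomic.irreducible_rat N.pos
  set w : R → K := fun r => ∑ t : R, ζ' ^ (ψ (r * t)).val * ((v t : ℚ) : K) with hw
  have hζmem : ζ ∈ primitiveRoots n ℂ := (mem_primitiveRoots (by omega)).mpr hζ
  set φ : K →ₐ[ℚ] ℂ := (hζ'.embeddingsEquivPrimitiveRoots ℂ hirr).symm ⟨ζ, hζmem⟩ with hφdef
  have hφζ : φ ζ' = ζ := by
    have h := hζ'.embeddingsEquivPrimitiveRoots_apply_coe ℂ hirr φ
    rw [hφdef, Equiv.apply_symm_apply] at h
    exact h.symm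
  have entry_eq : ∀ r : R, A.mulVec (fun t => (v t : ℂ)) r = φ (w r) := by
    intro r
    simp only [hw, map_sum, map_mul, map_pow, hφζ, map_ratCast]
    simp [Matrix.mulVec, dotProduct, hA]
  have psmul : ∀ (c : ZMod n) (x : R), ψ (c • x) = c * ψ x := by
    intro c x
    have h1 : c • x = c.val • x := by
      rw [← Nat.cast_smul_eq_nsmul (ZMod n) c.val x, ZMod.natCast_val, ZMod.cast_id]
    rw [h1, map_nsmul, nsmul_eq_mul, ZMod.natCast_val, ZMod.cast_id]
  have hcomp : ∀ (f : K →ₐ[ℚ] K) (u : (ZMod n)ˣ), f ζ' = ζ' ^ ((u : ZMod n)).val →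
      ∀ r : R, f (w r) = ∑ t : R,
        ζ' ^ (ψ (r * t)).val * ((v (((u⁻¹ : (ZMod n)ˣ) : ZMod n) • t) : ℚ) : K) := by
    intro f u hf r
    simp only [hw, map_sum]
    have step : ∀ t : R, f (ζ' ^ (ψ (r * t)).val * ((v t : ℚ) : K))
        = ζ' ^ (ψ (r * ((u : ZMod n) • t))).val * ((v t : ℚ) : K) := by
      intro t
      rw [map_mul, map_pow, hf, map_ratCast, ← pow_mul]
      congr 1
      rw [show r * ((u : ZMod n) • t) = (u : ZMod n) • (r * t) from mul_smul_comm _ _ _,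
        psmul, DFTAux.pow_val_mul hζ'n]
    rw [Finset.sum_congr rfl fun t _ => step t]
    apply Fintype.sum_equiv (MulAction.toPerm u)
    intro t
    have ht : (((u⁻¹ : (ZMod n)ˣ) : ZMod n)) • (((u : ZMod n)) • t) = t := by
      rw [← mul_smul, Units.inv_mul, one_smul]
    simp only [MulAction.toPerm_apply, Units.smul_def, ht]
  haveI hGal : IsGalois ℚ K := IsCyclotomicExtension.isGalois {(N : ℕ)} ℚ K
  haveI hFD : FiniteDimensional ℚ K := IsCyclotomicExtension.finiteDimensional {(N : ℕ)} ℚ K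
  have hfixtop : IntermediateField.fixedField (⊤ : Subgroup (K ≃ₐ[ℚ] K)) = ⊥ := by
    have h := IsGalois.fixedField_fixingSubgroup (⊥ : IntermediateField ℚ K)
    rwa [IntermediateField.fixingSubgroup_bot] at h
  have mkσ : ∀ c : (ZMod n)ˣ, ∃ f : K →ₐ[ℚ] K, f ζ' = ζ' ^ ((c : ZMod n)).val := by
    intro c
    have hcop : Nat.Coprime ((c : ZMod n)).val n := ZMod.val_coe_unit_coprime c
    have hprim : IsPrimitiveRoot (ζ' ^ ((c : ZMod n)).val) n :=
      (hζ'n.pow_iff_coprime (by omega) _).mpr hcop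
    have hmem : ζ' ^ ((c : ZMod n)).val ∈ primitiveRoots n K :=
      (mem_primitiveRoots (by omega)).mpr hprim
    refine ⟨(hζ'.embeddingsEquivPrimitiveRoots K hirr).symm ⟨_, hmem⟩, ?_⟩
    have h := hζ'.embeddingsEquivPrimitiveRoots_apply_coe K hirr
      ((hζ'.embeddingsEquivPrimitiveRoots K hirr).symm ⟨_, hmem⟩)
    rw [Equiv.apply_symm_apply] at h
    exact h.symm
  constructor
  · intro h u r
    obtain ⟨f, hf⟩ := mkσ u⁻¹
    have hwfix : ∀ r' : R, f (w r') = w r' := by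
      intro r'
      obtain ⟨q, hq⟩ := h r'
      have h1 : φ (w r') = ((q : ℚ) : ℂ) := by rw [← entry_eq r', ← hq]
      have h2 : w r' = ((q : ℚ) : K) := by
        apply φ.toRingHom.injective
        show φ (w r') = φ ((q : ℚ) : K)
        rw [h1, map_ratCast]
      rw [h2, map_ratCast]
    have hzero : ∀ r' : R, ∑ t : R,
        ζ' ^ (ψ (r' * t)).val * ((((v ((u : ZMod n) • t) : ℚ) : K)) - ((v t : ℚ) : K)) = 0 := by
      intro r'
      have h3 := (hcomp f u⁻¹ hf r').symm.trans (hwfix r')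
      rw [inv_inv] at h3
      simp only [mul_sub, Finset.sum_sub_distrib, h3]
      simp only [hw]
      exact sub_self _
    have h5 := DFTAux.inversion ψ hψ hζ'n _ hzero r
    have h6 : ((v ((u : ZMod n) • r) : ℚ) : K) = ((v r : ℚ) : K) := sub_eq_zero.mp h5
    exact_mod_cast h6
  · intro hv r
    have hfix : ∀ σ : K ≃ₐ[ℚ] K, σ (w r) = w r := by
      intro σ
      have hprim : IsPrimitiveRoot (σ ζ') (N : ℕ) := hζ'.map_of_injective σ.injective
      obtain ⟨i, hi, hpow⟩ := hζ'n.eq_pow_of_pow_eq_one hprim.pow_eq_one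
      have hcop : i.Coprime n := (hζ'n.pow_iff_coprime (by omega) i).mp (hpow ▸ hprim)
      set c : (ZMod n)ˣ := ZMod.unitOfCoprime i hcop with hc
      have hfζ : σ.toAlgHom ζ' = ζ' ^ ((c : ZMod n)).val := by
        rw [show ((c : ZMod n)) = (i : ZMod n) from rfl, DFTAux.pow_val_natCast hζ'n]
        exact hpow.symm
      have h4 := hcomp σ.toAlgHom c hfζ r
      have h5 : σ (w r) = ∑ t : R,
          ζ' ^ (ψ (r * t)).val * ((v (((c⁻¹ : (ZMod n)ˣ) : ZMod n) • t) : ℚ) : K) := h4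
      rw [h5]
      simp only [hw]
      exact Finset.sum_congr rfl fun t _ => by rw [hv c⁻¹ t]
    have hbot : w r ∈ (⊥ : IntermediateField ℚ K) := by
      rw [← hfixtop]
      exact fun g => hfix g
    obtain ⟨q, hq⟩ := IntermediateField.mem_bot.mp hbot
    exact ⟨q, by rw [entry_eq r, ← hq, AlgHom.commutes, eq_ratCast (algebraMap ℚ ℂ) q]⟩
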